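/- Let a and b be positive integers. The meander of type a|b (two top blocks of sizes a and b, one bottom block of size a+b) is Frobenius — that is, its meander graph is connected and acyclic — if and only if gcd(a, b) = 1. -/

import Mathlib

/-- The meander graph of type `a₁|a₂|⋯|a_ℓ` where `L = [a₁,…,a_ℓ]` is the list of top
block sizes, on vertex set `Fin (a₁ + ⋯ + a_ℓ)`, with top edges within each block and
bottom edges `j ↔ n - 1 - j` coming from the single bottom block of size `n = L.sum`. -/
def meander (L : List ℕ) : SimpleGraph (Fin L.sum) :=
  SimpleGraph.fromRel (fun u v =>
    (∃ k : Fin L.length, ∃ i : ℕ, i < L.get k ∧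
      (u : ℕ) = (L.take k.val).sum + i ∧
      (v : ℕ) = (L.take k.val).sum + (L.get k - 1 - i))
    ∨ ((u : ℕ) + (v : ℕ) = L.sum - 1))

/-- A connected component is a cycle component if every vertex in it has degree 2. -/
def SimpleGraph.IsCycleComponent {V : Type*} (G : SimpleGraph V)
    (c : G.ConnectedComponent) : Prop :=
  ∀ v : V, G.connectedComponentMk v = c → (G.neighborSet v).ncard = 2

/-- The number of connected components of `G` that are cycles. -/
noncomputable def numCycleComponents {V : Type*} (G : SimpleGraph V) : ℕ :=
  Nat.card {c : G.ConnectedComponent // G.IsCycleComponent c}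

/-- The number of connected components of `G` that are paths (i.e. not cycles). -/
noncomputable def numPathComponents {V : Type*} (G : SimpleGraph V) : ℕ :=
  Nat.card {c : G.ConnectedComponent // ¬ G.IsCycleComponent c}

/-- A meander is Frobenius if its graph is a single path, equivalently (as every vertex
has degree at most 2) connected and acyclic. -/
def IsFrobenius {V : Type*} (G : SimpleGraph V) : Prop :=
  G.Connected ∧ G.IsAcyclic


open SimpleGraph

lemma rel2_iff (a b : ℕ) (ha : 0 < a) (hb : 0 < b) (x y : ℕ) (hx : x < a + b) (hy : y < a + b) :
    ((∃ k : Fin ([a,b] : List ℕ).length, ∃ i : ℕ, i < ([a,b] : List ℕ).get k ∧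
      x = (([a,b] : List ℕ).take k.val).sum + i ∧
      y = (([a,b] : List ℕ).take k.val).sum + (([a,b] : List ℕ).get k - 1 - i))
    ∨ (x + y = ([a,b] : List ℕ).sum - 1))
    ↔ (x + y = a - 1 ∨ x + y = a + b - 1 ∨ x + y = 2*a + b - 1) := by
  constructor
  · rintro (⟨⟨k, hk⟩, i, hi, h1, h2⟩ | h)
    · simp only [List.length_cons, List.length_nil] at hk
      interval_cases k <;>
        simp only [List.get, List.take, List.sum_cons, List.sum_nil] at hi h1 h2 <;> omega
    · simp only [List.sum_cons, List.sum_nil] at h; omega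
  · rintro (h | h | h)
    · refine Or.inl ⟨⟨0, by norm_num⟩, x, ?_, ?_, ?_⟩ <;>
        simp only [List.get, List.take, List.sum_cons, List.sum_nil] <;> omega
    · right; simp only [List.sum_cons, List.sum_nil]; omega
    · refine Or.inl ⟨⟨1, by norm_num⟩, x - a, ?_, ?_, ?_⟩ <;>
        simp only [List.get, List.take, List.sum_cons, List.sum_nil] <;> omega

lemma meander_adj (a b : ℕ) (ha : 0 < a) (hb : 0 < b) (u v : Fin ([a,b] : List ℕ).sum) :
    (meander [a,b]).Adj u v ↔ u ≠ v ∧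
      ((u:ℕ) + (v:ℕ) = a - 1 ∨ (u:ℕ) + (v:ℕ) = a + b - 1 ∨ (u:ℕ) + (v:ℕ) = 2*a + b - 1) := by
  have hu := u.isLt; have hv := v.isLt
  simp only [List.sum_cons, List.sum_nil, Nat.add_zero] at hu hv
  rw [meander, SimpleGraph.fromRel_adj,
    rel2_iff a b ha hb _ _ hu hv, rel2_iff a b ha hb _ _ hv hu]
  constructor
  · rintro ⟨h1, h2 | h2⟩ <;> exact ⟨h1, by omega⟩
  · rintro ⟨h1, h2⟩; exact ⟨h1, Or.inl h2⟩

lemma reachable_of_reachable_deleteEdge {V : Type*} {G : SimpleGraph V} {u v : V}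
    (huv : (G \ fromEdgeSet {s(u,v)}).Reachable u v) {x y : V} (hxy : G.Reachable x y) :
    (G \ fromEdgeSet {s(u,v)}).Reachable x y := by
  obtain ⟨w⟩ := hxy
  induction w with
  | nil => exact Reachable.refl _
  | @cons x z y h p ih =>
      refine Reachable.trans ?_ ih
      by_cases he : s(x, z) = s(u, v)
      · rw [Sym2.eq_iff] at he
        rcases he with ⟨rfl, rfl⟩ | ⟨rfl, rfl⟩
        · exact huv
        · exact huv.symm
      · exact Adj.reachable (by simp [sdiff_adj, fromEdgeSet_adj, he, h])

lemma exists_connected_deleteEdge {V : Type*} [Fintype V] (G : SimpleGraph V)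
    (hG : G.Connected) (hac : ¬ G.IsAcyclic) :
    ∃ G' : SimpleGraph V, G'.Connected ∧ G'.edgeSet.ncard + 1 = G.edgeSet.ncard := by
  classical
  rw [isAcyclic_iff_forall_edge_isBridge] at hac
  push_neg at hac
  obtain ⟨e, he, hbr⟩ := hac
  induction e with
  | h u v =>
  rw [mem_edgeSet] at he
  rw [isBridge_iff] at hbr
  push_neg at hbr
  have hre : (G \ fromEdgeSet {s(u,v)}).Reachable u v := hbr
  refine ⟨G \ fromEdgeSet {s(u,v)}, ?_, ?_⟩
  · haveI := hG.nonempty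
    exact Connected.mk fun x y => reachable_of_reachable_deleteEdge hre (hG.preconnected x y)
  · have hset : (G \ fromEdgeSet {s(u,v)}).edgeSet = G.edgeSet \ {s(u,v)} := by
      ext e
      simp only [edgeSet_sdiff, edgeSet_fromEdgeSet, Set.mem_diff, Set.mem_setOf_eq,
        Set.mem_singleton_iff]
      constructor
      · rintro ⟨h1, h2⟩
        exact ⟨h1, fun h => h2 ⟨h, by rcases h with rfl; simp [Sym2.isDiag_iff_proj_eq, he.ne]⟩⟩
      · rintro ⟨h1, h2⟩
        exact ⟨h1, fun h => h2 h.1⟩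
    rw [hset]
    exact Set.ncard_diff_singleton_add_one (by rwa [mem_edgeSet]) (Set.toFinite _)

lemma card_le_edgeSet_ncard_add_one {V : Type*} [Fintype V] :
    ∀ (k : ℕ) (G : SimpleGraph V), G.Connected →
      G.edgeSet.ncard ≤ k → Fintype.card V ≤ G.edgeSet.ncard + 1 := by
  intro k
  induction k with
  | zero =>
      intro G hG hcard
      classical
      by_cases hac : G.IsAcyclic
      · haveI : Fintype G.edgeSet := (Set.toFinite _).fintype
        have := IsTree.card_edgeFinset ⟨hG, hac⟩
        rw [Set.ncard_eq_toFinset_card']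
        exact le_of_eq this.symm
      · exfalso
        obtain ⟨G', hc', hcard'⟩ := exists_connected_deleteEdge G hG hac
        omega
  | succ k ih =>
      intro G hG hcard
      classical
      by_cases hac : G.IsAcyclic
      · haveI : Fintype G.edgeSet := (Set.toFinite _).fintype
        have := IsTree.card_edgeFinset ⟨hG, hac⟩
        rw [Set.ncard_eq_toFinset_card']
        exact le_of_eq this.symm
      · obtain ⟨G', hc', hcard'⟩ := exists_connected_deleteEdge G hG hac
        have := ih G' hc' (by omega)
        omega

lemma isAcyclic_of_connected_of_ncard {V : Type*} [Fintype V] (G : SimpleGraph V)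
    (hG : G.Connected) (hcard : G.edgeSet.ncard + 1 = Fintype.card V) : G.IsAcyclic := by
  by_contra hac
  obtain ⟨G', hc', hcard'⟩ := exists_connected_deleteEdge G hG hac
  have := card_le_edgeSet_ncard_add_one G'.edgeSet.ncard G' hc' le_rfl
  omega

lemma mod_pred_of_dvd_succ {d x : ℕ} (hd : 0 < d) (hdvd : d ∣ (x + 1)) : x % d = d - 1 := by
  obtain ⟨m, hm⟩ := hdvd
  match m, hm with
  | 0, hm => omega
  | (m' + 1), hm =>
      rw [Nat.mul_succ] at hm
      rw [show x = d - 1 + d * m' by omega, Nat.add_mul_mod_self_left,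
        Nat.mod_eq_of_lt (by omega)]


section
variable (a b : ℕ)

lemma list_sum_ab : ([a,b] : List ℕ).sum = a + b := by simp

/-- the sum of the two endpoint values of an unordered pair -/
def pairSum {n : ℕ} : Sym2 (Fin n) → ℕ :=
  Sym2.lift ⟨fun u v => (u : ℕ) + (v : ℕ), fun u v => Nat.add_comm _ _⟩

open Fin.NatCast in
lemma meander_edge_count (ha : 0 < a) (hb : 0 < b) :
    (meander [a,b]).edgeSet.ncard = a/2 + b/2 + (a+b)/2 := by
  classical
  have hn : ([a,b] : List ℕ).sum = a + b := list_sum_ab a b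
  haveI : NeZero (([a,b] : List ℕ).sum) := ⟨by omega⟩
  set n' := ([a,b] : List ℕ).sum with hn'
  -- helper for val of casts
  have hval : ∀ x : ℕ, x < a + b → ((x : Fin n') : ℕ) = x := by
    intro x hx
    exact Fin.val_cast_of_lt (by omega)
  set f1 : ℕ → Sym2 (Fin n') := fun i => s((i : Fin n'), ((a - 1 - i : ℕ) : Fin n')) with hf1
  set f2 : ℕ → Sym2 (Fin n') :=
    fun i => s(((a + i : ℕ) : Fin n'), ((a + b - 1 - i : ℕ) : Fin n')) with hf2
  set f3 : ℕ → Sym2 (Fin n') :=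
    fun i => s((i : Fin n'), ((a + b - 1 - i : ℕ) : Fin n')) with hf3
  set T1 : Finset (Sym2 (Fin n')) := (Finset.range (a/2)).image f1 with hT1
  set T2 : Finset (Sym2 (Fin n')) := (Finset.range (b/2)).image f2 with hT2
  set T3 : Finset (Sym2 (Fin n')) := (Finset.range ((a+b)/2)).image f3 with hT3
  -- pairSum values
  have hps1 : ∀ e ∈ T1, pairSum e = a - 1 := by
    intro e he
    rw [hT1, Finset.mem_image] at he
    obtain ⟨i, hi, rfl⟩ := he
    rw [Finset.mem_range] at hi
    simp only [hf1, pairSum, Sym2.lift_mk]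
    rw [hval i (by omega), hval (a-1-i) (by omega)]
    omega
  have hps2 : ∀ e ∈ T2, pairSum e = 2*a + b - 1 := by
    intro e he
    rw [hT2, Finset.mem_image] at he
    obtain ⟨i, hi, rfl⟩ := he
    rw [Finset.mem_range] at hi
    simp only [hf2, pairSum, Sym2.lift_mk]
    rw [hval (a+i) (by omega), hval (a+b-1-i) (by omega)]
    omega
  have hps3 : ∀ e ∈ T3, pairSum e = a + b - 1 := by
    intro e he
    rw [hT3, Finset.mem_image] at he
    obtain ⟨i, hi, rfl⟩ := he
    rw [Finset.mem_range] at hi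
    simp only [hf3, pairSum, Sym2.lift_mk]
    rw [hval i (by omega), hval (a+b-1-i) (by omega)]
    omega
  -- the edge set is the union
  have hkey : (meander [a,b]).edgeSet = ↑(T1 ∪ T2 ∪ T3) := by
    ext e
    refine e.ind ?_
    intro u v
    have hu : (u : ℕ) < a + b := by have := u.isLt; omega
    have hv : (v : ℕ) < a + b := by have := v.isLt; omega
    rw [mem_edgeSet, meander_adj a b ha hb, Finset.coe_union, Finset.coe_union]
    simp only [Set.mem_union, Finset.mem_coe]
    constructor
    · rintro ⟨hne, h | h | h⟩
      · have hne' : (u : ℕ) ≠ (v : ℕ) := fun hc => hne (Fin.ext hc)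
        refine Or.inl (Or.inl ?_)
        rw [hT1, Finset.mem_image]
        refine ⟨min (u : ℕ) (v : ℕ), Finset.mem_range.2 (by omega), ?_⟩
        rw [hf1]
        rw [Sym2.eq_iff]
        have h1 := hval (min (u : ℕ) (v : ℕ)) (by omega)
        have h2 := hval (a - 1 - min (u : ℕ) (v : ℕ)) (by omega)
        rcases Nat.le_total (u : ℕ) (v : ℕ) with hc | hc
        · exact Or.inl ⟨Fin.ext (by omega), Fin.ext (by omega)⟩
        · exact Or.inr ⟨Fin.ext (by omega), Fin.ext (by omega)⟩
      · have hne' : (u : ℕ) ≠ (v : ℕ) := fun hc => hne (Fin.ext hc)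
        refine Or.inr ?_
        rw [hT3, Finset.mem_image]
        refine ⟨min (u : ℕ) (v : ℕ), Finset.mem_range.2 (by omega), ?_⟩
        rw [hf3, Sym2.eq_iff]
        have h1 := hval (min (u : ℕ) (v : ℕ)) (by omega)
        have h2 := hval (a + b - 1 - min (u : ℕ) (v : ℕ)) (by omega)
        rcases Nat.le_total (u : ℕ) (v : ℕ) with hc | hc
        · exact Or.inl ⟨Fin.ext (by omega), Fin.ext (by omega)⟩
        · exact Or.inr ⟨Fin.ext (by omega), Fin.ext (by omega)⟩
      · have hne' : (u : ℕ) ≠ (v : ℕ) := fun hc => hne (Fin.ext hc)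
        refine Or.inl (Or.inr ?_)
        rw [hT2, Finset.mem_image]
        refine ⟨min (u : ℕ) (v : ℕ) - a, Finset.mem_range.2 (by omega), ?_⟩
        rw [hf2, Sym2.eq_iff]
        have h1 := hval (a + (min (u : ℕ) (v : ℕ) - a)) (by omega)
        have h2 := hval (a + b - 1 - (min (u : ℕ) (v : ℕ) - a)) (by omega)
        rcases Nat.le_total (u : ℕ) (v : ℕ) with hc | hc
        · exact Or.inl ⟨Fin.ext (by omega), Fin.ext (by omega)⟩
        · exact Or.inr ⟨Fin.ext (by omega), Fin.ext (by omega)⟩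
    · intro h
      rcases h with (h | h) | h
      · rw [hT1, Finset.mem_image] at h
        obtain ⟨i, hi, hfe⟩ := h
        rw [Finset.mem_range] at hi
        rw [hf1, Sym2.eq_iff] at hfe
        have h1 := hval i (by omega)
        have h2 := hval (a - 1 - i) (by omega)
        have : ((u : ℕ) = i ∧ (v : ℕ) = a - 1 - i) ∨ ((u : ℕ) = a - 1 - i ∧ (v : ℕ) = i) := by
          rcases hfe with ⟨he1, he2⟩ | ⟨he1, he2⟩
          · exact Or.inl ⟨by rw [← he1, h1], by rw [← he2, h2]⟩
          · exact Or.inr ⟨by rw [← he2, h2], by rw [← he1, h1]⟩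
        refine ⟨fun hc => ?_, by omega⟩
        rw [hc] at this
        omega
      · rw [hT2, Finset.mem_image] at h
        obtain ⟨i, hi, hfe⟩ := h
        rw [Finset.mem_range] at hi
        rw [hf2, Sym2.eq_iff] at hfe
        have h1 := hval (a + i) (by omega)
        have h2 := hval (a + b - 1 - i) (by omega)
        have : ((u : ℕ) = a + i ∧ (v : ℕ) = a + b - 1 - i) ∨
            ((u : ℕ) = a + b - 1 - i ∧ (v : ℕ) = a + i) := by
          rcases hfe with ⟨he1, he2⟩ | ⟨he1, he2⟩
          · exact Or.inl ⟨by rw [← he1, h1], by rw [← he2, h2]⟩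
          · exact Or.inr ⟨by rw [← he2, h2], by rw [← he1, h1]⟩
        refine ⟨fun hc => ?_, by omega⟩
        rw [hc] at this
        omega
      · rw [hT3, Finset.mem_image] at h
        obtain ⟨i, hi, hfe⟩ := h
        rw [Finset.mem_range] at hi
        rw [hf3, Sym2.eq_iff] at hfe
        have h1 := hval i (by omega)
        have h2 := hval (a + b - 1 - i) (by omega)
        have : ((u : ℕ) = i ∧ (v : ℕ) = a + b - 1 - i) ∨
            ((u : ℕ) = a + b - 1 - i ∧ (v : ℕ) = i) := by
          rcases hfe with ⟨he1, he2⟩ | ⟨he1, he2⟩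
          · exact Or.inl ⟨by rw [← he1, h1], by rw [← he2, h2]⟩
          · exact Or.inr ⟨by rw [← he2, h2], by rw [← he1, h1]⟩
        refine ⟨fun hc => ?_, by omega⟩
        rw [hc] at this
        omega
  rw [hkey, Set.ncard_coe_finset]
  have hd12 : Disjoint T1 T2 := by
    rw [Finset.disjoint_left]
    intro e h1 h2
    have := hps1 e h1
    have := hps2 e h2
    omega
  have hd13 : Disjoint (T1 ∪ T2) T3 := by
    rw [Finset.disjoint_left]
    intro e h1 h2
    have h3 := hps3 e h2
    rcases Finset.mem_union.1 h1 with h | h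
    · have := hps1 e h; omega
    · have := hps2 e h; omega
  rw [Finset.card_union_of_disjoint hd13, Finset.card_union_of_disjoint hd12]
  have hc1 : T1.card = a/2 := by
    rw [hT1, Finset.card_image_of_injOn, Finset.card_range]
    intro i hi j hj hij
    rw [Finset.mem_coe, Finset.mem_range] at hi hj
    rw [hf1, Sym2.eq_iff] at hij
    have h1 := hval i (by omega)
    have h2 := hval j (by omega)
    have h3 := hval (a - 1 - i) (by omega)
    have h4 := hval (a - 1 - j) (by omega)
    rcases hij with ⟨he1, he2⟩ | ⟨he1, he2⟩ <;>
      [skip; skip] <;>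
      · have e1 := congrArg Fin.val he1
        have e2 := congrArg Fin.val he2
        omega
  have hc2 : T2.card = b/2 := by
    rw [hT2, Finset.card_image_of_injOn, Finset.card_range]
    intro i hi j hj hij
    rw [Finset.mem_coe, Finset.mem_range] at hi hj
    rw [hf2, Sym2.eq_iff] at hij
    have h1 := hval (a + i) (by omega)
    have h2 := hval (a + j) (by omega)
    have h3 := hval (a + b - 1 - i) (by omega)
    have h4 := hval (a + b - 1 - j) (by omega)
    rcases hij with ⟨he1, he2⟩ | ⟨he1, he2⟩ <;>
      · have e1 := congrArg Fin.val he1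
        have e2 := congrArg Fin.val he2
        omega
  have hc3 : T3.card = (a+b)/2 := by
    rw [hT3, Finset.card_image_of_injOn, Finset.card_range]
    intro i hi j hj hij
    rw [Finset.mem_coe, Finset.mem_range] at hi hj
    rw [hf3, Sym2.eq_iff] at hij
    have h1 := hval i (by omega)
    have h2 := hval j (by omega)
    have h3 := hval (a + b - 1 - i) (by omega)
    have h4 := hval (a + b - 1 - j) (by omega)
    rcases hij with ⟨he1, he2⟩ | ⟨he1, he2⟩ <;>
      · have e1 := congrArg Fin.val he1
        have e2 := congrArg Fin.val he2
        omega
  rw [hc1, hc2, hc3]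
end

section
variable {a b : ℕ}

lemma meander_step (ha : 0 < a) (hb : 0 < b) (u : Fin ([a,b] : List ℕ).sum) :
    (meander [a,b]).Reachable u
      (⟨((u : ℕ) + a) % (a + b), by apply Nat.mod_lt; omega⟩ : Fin (([a,b] : List ℕ).sum)) := by
  have hn : ([a,b] : List ℕ).sum = a + b := by simp
  have hu : (u : ℕ) < a + b := by have := u.isLt; omega
  set u' : Fin (([a,b] : List ℕ).sum) :=
    ⟨((u : ℕ) + a) % (a + b), by apply Nat.mod_lt; omega⟩ with hu'
  have hu'val : (u' : ℕ) = if (u : ℕ) < b then (u : ℕ) + a else (u : ℕ) - b := by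
    show ((u : ℕ) + a) % (a + b) = _
    split
    · exact Nat.mod_eq_of_lt (by omega)
    · rw [show (u : ℕ) + a = ((u : ℕ) - b) + 1 * (a + b) by omega,
        Nat.add_mul_mod_self_right, Nat.mod_eq_of_lt (by omega)]
  by_cases hmid : 2 * (u : ℕ) = a + b - 1
  · -- u is the bottom fixed point: direct top edge to u'
    refine Adj.reachable ?_
    rw [meander_adj a b ha hb]
    constructor
    · intro hc
      rw [hc] at hu'val
      split at hu'val <;> omega
    · rw [hu'val]; split <;> omega
  · -- go through the bottom partner w
    set w : Fin (([a,b] : List ℕ).sum) := ⟨a + b - 1 - (u : ℕ), by omega⟩ with hw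
    have h1 : (meander [a,b]).Adj u w := by
      rw [meander_adj a b ha hb]
      refine ⟨fun hc => ?_, Or.inr (Or.inl (by simp only [hw]; omega))⟩
      have hval := congrArg Fin.val hc
      simp only [hw] at hval
      omega
    by_cases hwu : w = u'
    · exact Adj.reachable (hwu ▸ h1)
    · refine (Adj.reachable h1).trans (Adj.reachable ?_)
      rw [meander_adj a b ha hb]
      refine ⟨hwu, ?_⟩
      rw [hu'val]
      simp only [hw]
      split <;> omega
end

lemma meander_reach_mul (ha : 0 < a) (hb : 0 < b) (u : Fin ([a,b] : List ℕ).sum) (k : ℕ) :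
    (meander [a,b]).Reachable u
      (⟨((u : ℕ) + k * a) % (a + b), by apply Nat.mod_lt; simp; omega⟩ :
        Fin (([a,b] : List ℕ).sum)) := by
  have hu : (u : ℕ) < a + b := by
    have := u.isLt
    simp only [List.sum_cons, List.sum_nil, Nat.add_zero] at this
    omega
  induction k with
  | zero =>
      have : (⟨((u : ℕ) + 0 * a) % (a + b), by apply Nat.mod_lt; simp; omega⟩ :
          Fin (([a,b] : List ℕ).sum)) = u := by
        apply Fin.ext
        show ((u : ℕ) + 0 * a) % (a + b) = (u : ℕ)
        rw [Nat.zero_mul, Nat.add_zero, Nat.mod_eq_of_lt hu]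
      rw [this]
  | succ k ih =>
      refine ih.trans ?_
      have hstep := meander_step ha hb
        (⟨((u : ℕ) + k * a) % (a + b), by apply Nat.mod_lt; simp; omega⟩ :
          Fin (([a,b] : List ℕ).sum))
      convert hstep using 2
      refine Fin.ext ?_
      show ((u : ℕ) + (k+1) * a) % (a + b) = (((u : ℕ) + k * a) % (a + b) + a) % (a + b)
      rw [Nat.mod_add_mod, Nat.succ_mul, Nat.add_assoc]

lemma meander_connected (ha : 0 < a) (hb : 0 < b) (hg : Nat.gcd a b = 1) :
    (meander [a,b]).Connected := by
  haveI : NeZero (a + b) := ⟨by omega⟩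
  have hco : Nat.Coprime a (a + b) := by
    unfold Nat.Coprime
    rw [Nat.add_comm a b, Nat.gcd_add_self_right]
    exact hg
  have h0 : (0 : ℕ) < ([a,b] : List ℕ).sum := by simp; omega
  have hpre : ∀ v : Fin ([a,b] : List ℕ).sum,
      (meander [a,b]).Reachable ⟨0, h0⟩ v := by
    intro v
    have hv : (v : ℕ) < a + b := by
      have := v.isLt
      simp only [List.sum_cons, List.sum_nil, Nat.add_zero] at this
      omega
    set zu := ZMod.unitOfCoprime a hco with hzu
    set z : ZMod (a + b) := ((v : ℕ) : ZMod (a + b)) * ((zu⁻¹ : (ZMod (a+b))ˣ) : ZMod (a+b))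
      with hz
    set k := z.val with hk
    have hcast : ((k * a : ℕ) : ZMod (a + b)) = ((v : ℕ) : ZMod (a + b)) := by
      push_cast
      rw [hk, ZMod.natCast_zmod_val, hz]
      have hone : ((zu⁻¹ : (ZMod (a+b))ˣ) : ZMod (a+b)) * ((a : ℕ) : ZMod (a+b)) = 1 := by
        rw [show ((a : ℕ) : ZMod (a+b)) = ((zu : (ZMod (a+b))ˣ) : ZMod (a+b)) from
          (ZMod.coe_unitOfCoprime a hco).symm, ← Units.val_mul, inv_mul_cancel, Units.val_one]
      rw [mul_assoc, hone, mul_one]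
    have hmod : (0 + k * a) % (a + b) = (v : ℕ) := by
      rw [Nat.zero_add]
      have := (ZMod.natCast_eq_natCast_iff _ _ _).1 hcast
      unfold Nat.ModEq at this
      rwa [Nat.mod_eq_of_lt hv] at this
    have := meander_reach_mul ha hb (⟨0, h0⟩ : Fin ([a,b] : List ℕ).sum) k
    convert this using 2
    refine Fin.ext ?_
    show (v : ℕ) = ((0 : ℕ) + k * a) % (a + b)
    exact hmod.symm
  haveI : Nonempty (Fin ([a,b] : List ℕ).sum) := ⟨⟨0, h0⟩⟩
  exact Connected.mk fun x y => (hpre x).symm.trans (hpre y)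

section
variable {a b : ℕ}

lemma meander_adj_mod (ha : 0 < a) (hb : 0 < b) {u v : Fin ([a,b] : List ℕ).sum}
    (h : (meander [a,b]).Adj u v) :
    ((u : ℕ) + (v : ℕ)) % (Nat.gcd a b) = Nat.gcd a b - 1 := by
  have hd : 0 < Nat.gcd a b := Nat.gcd_pos_of_pos_left b ha
  have hda : Nat.gcd a b ∣ a := Nat.gcd_dvd_left a b
  have hdb : Nat.gcd a b ∣ b := Nat.gcd_dvd_right a b
  rw [meander_adj a b ha hb] at h
  obtain ⟨-, h | h | h⟩ := h
  · exact mod_pred_of_dvd_succ hd (by rw [show (u:ℕ)+(v:ℕ)+1 = a by omega]; exact hda)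
  · refine mod_pred_of_dvd_succ hd ?_
    rw [show (u:ℕ)+(v:ℕ)+1 = a + b by omega]
    exact Nat.dvd_add hda hdb
  · refine mod_pred_of_dvd_succ hd ?_
    rw [show (u:ℕ)+(v:ℕ)+1 = 2*a + b by omega]
    exact Nat.dvd_add (Dvd.dvd.mul_left hda 2) hdb

lemma meander_walk_inv (ha : 0 < a) (hb : 0 < b) {x y : Fin ([a,b] : List ℕ).sum}
    (w : (meander [a,b]).Walk x y)
    (hx : (x : ℕ) % (Nat.gcd a b) = 0 ∨ (x : ℕ) % (Nat.gcd a b) = Nat.gcd a b - 1) :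
    (y : ℕ) % (Nat.gcd a b) = 0 ∨ (y : ℕ) % (Nat.gcd a b) = Nat.gcd a b - 1 := by
  set d := Nat.gcd a b with hdd
  have hd : 0 < d := Nat.gcd_pos_of_pos_left b ha
  induction w with
  | nil => exact hx
  | @cons x z y h p ih =>
      apply ih
      have hsum := meander_adj_mod ha hb h
      rw [← hdd] at hsum
      rw [Nat.add_mod] at hsum
      rcases hx with hx | hx
      · rw [hx, Nat.zero_add, Nat.mod_mod_of_dvd _ dvd_rfl] at hsum
        exact Or.inr hsum
      · rw [hx] at hsum
        set r := (z : ℕ) % d with hr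
        have hrd : r < d := Nat.mod_lt _ hd
        by_cases hr0 : r = 0
        · exact Or.inl hr0
        · exfalso
          rw [show d - 1 + r = (r - 1) + d by omega, Nat.add_mod_right,
            Nat.mod_eq_of_lt (by omega)] at hsum
          omega

lemma meander_not_connected (ha : 0 < a) (hb : 0 < b) (hd : 3 ≤ Nat.gcd a b) :
    ¬ (meander [a,b]).Connected := by
  intro hconn
  have h0 : (0 : ℕ) < ([a,b] : List ℕ).sum := by simp; omega
  have h1 : (1 : ℕ) < ([a,b] : List ℕ).sum := by simp; omega
  obtain ⟨w⟩ := hconn.preconnected ⟨0, h0⟩ ⟨1, h1⟩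
  have := meander_walk_inv ha hb w (Or.inl (by simp))
  have h1d : (1 : ℕ) % Nat.gcd a b = 1 := Nat.mod_eq_of_lt (by omega)
  simp only [h1d] at this
  omega
end

/-- Elashvili / Coll–Gerstenhaber–Magnant: the meander of type `a|b` is Frobenius
if and only if `gcd(a, b) = 1`. -/
theorem meander_two_blocks_frobenius_iff (a b : ℕ) (ha : 0 < a) (hb : 0 < b) :
    IsFrobenius (meander [a, b]) ↔ Nat.gcd a b = 1 := by
  classical
  have hcardV : Fintype.card (Fin (([a,b] : List ℕ).sum)) = a + b := by
    rw [Fintype.card_fin]; simp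
  constructor
  · rintro ⟨hconn, hacyc⟩
    by_contra hg
    have hd : 0 < Nat.gcd a b := Nat.gcd_pos_of_pos_left b ha
    rcases Nat.lt_or_ge (Nat.gcd a b) 3 with h3 | h3
    · have hg2 : Nat.gcd a b = 2 := by omega
      have h2a : 2 ∣ a := hg2 ▸ Nat.gcd_dvd_left a b
      have h2b : 2 ∣ b := hg2 ▸ Nat.gcd_dvd_right a b
      haveI : Fintype (meander [a,b]).edgeSet := (Set.toFinite _).fintype
      have htree := SimpleGraph.IsTree.card_edgeFinset ⟨hconn, hacyc⟩
      have hncard : (meander [a,b]).edgeSet.ncard = (meander [a,b]).edgeFinset.card :=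
        Set.ncard_eq_toFinset_card' _
      have hcount := meander_edge_count a b ha hb
      rw [hcardV] at htree
      omega
    · exact meander_not_connected ha hb h3 hconn
  · intro hg
    have hconn := meander_connected ha hb hg
    refine ⟨hconn, ?_⟩
    apply isAcyclic_of_connected_of_ncard _ hconn
    rw [meander_edge_count a b ha hb, hcardV]
    have hnotboth : ¬(2 ∣ a ∧ 2 ∣ b) := by
      rintro ⟨h1, h2⟩
      have := Nat.dvd_gcd h1 h2
      omega
    omega
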